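/- Let x₁, x₂ ∈ ℂ be such that θ̄(x₂−x₁) ≠ 0 and θ̄((d/n)(kτ + l)) ≠ 0 for every (k,l) ∈ {1,…,n}² with (k,l) ≠ (n,n). Then the function v ↦ v · r(v; x₁, x₂) (an n²×n² matrix-valued function of v) has a removable singularity at v = 0, and its limit as v → 0 equals (1/n) · (𝟙 ⊗ 𝟙), the scalar matrix (1/n) times the n²×n² identity matrix; i.e. r(v; x₁, x₂) has a simple pole at v = 0 with residue (1/n) · 𝟙 ⊗ 𝟙. -/

import Mathlib

open Complex Matrix
open scoped Kronecker

noncomputable section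

/-- `ε = exp(2πi d/n)`. -/
def eps (n d : ℕ) : ℂ := Complex.exp (2 * Real.pi * Complex.I * d / n)

/-- The diagonal matrix `X = diag(1, ε, ε², …, ε^{n−1})`. -/
def Xmat (n d : ℕ) : Matrix (Fin n) (Fin n) ℂ :=
  Matrix.diagonal fun i => eps n d ^ (i : ℕ)

/-- The cyclic shift matrix `Y` with `Y_{i,j} = 1` iff `j ≡ i+1 (mod n)`. -/
def Ymat (n : ℕ) : Matrix (Fin n) (Fin n) ℂ :=
  Matrix.of fun i j => if (j : ℕ) = ((i : ℕ) + 1) % n then 1 else 0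

/-- `Z_{(k,l)} = Y^k X^{−l}`. -/
def Zmat (n d : ℕ) (k l : ℕ) : Matrix (Fin n) (Fin n) ℂ :=
  Ymat n ^ k * (Xmat n d)⁻¹ ^ l

/-- `Z^∨_{(k,l)} = (1/n) X^l Y^{−k}`. -/
def Zdual (n d : ℕ) (k l : ℕ) : Matrix (Fin n) (Fin n) ℂ :=
  (n : ℂ)⁻¹ • (Xmat n d ^ l * (Ymat n)⁻¹ ^ k)

/-- The third Jacobi theta function `θ(z) = ∑_{m ∈ ℤ} exp(πiτm² + 2πimz)`. -/
def theta3 (τ z : ℂ) : ℂ :=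
  ∑' m : ℤ, Complex.exp (Real.pi * Complex.I * τ * (m : ℂ) ^ 2 +
    2 * Real.pi * Complex.I * (m : ℂ) * z)

/-- The first Jacobi theta function
`θ̄(z) = 2 exp(πiτ/4) ∑_{m ≥ 0} (−1)^m exp(πiτ m(m+1)) sin((2m+1)πz)`. -/
def theta1 (τ z : ℂ) : ℂ :=
  2 * Complex.exp (Real.pi * Complex.I * τ / 4) *
    ∑' m : ℕ, (-1 : ℂ) ^ m * Complex.exp (Real.pi * Complex.I * τ * (m : ℂ) * ((m : ℂ) + 1)) *
      Complex.sin ((2 * (m : ℂ) + 1) * Real.pi * z)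

/-- The Kronecker elliptic function `σ(u, z) = θ̄′(0) θ̄(u+z) / (θ̄(u) θ̄(z))`. -/
def sigmaK (τ u z : ℂ) : ℂ :=
  deriv (theta1 τ) 0 * theta1 τ (u + z) / (theta1 τ u * theta1 τ z)

/-- The elliptic solution `r(v; x₁, x₂)` of the AYBE, as an `n²×n²` matrix. -/
def rmat (n d : ℕ) (τ : ℂ) (v x₁ x₂ : ℂ) :
    Matrix (Fin n × Fin n) (Fin n × Fin n) ℂ :=
  ∑ p : Fin n × Fin n,
    (Complex.exp (2 * Real.pi * Complex.I * d * ((p.1.1 : ℂ) + 1) * (x₂ - x₁) / n) *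
      sigmaK τ (v + ((d : ℂ) / n) * (((p.1.1 : ℂ) + 1) * τ + ((p.2.1 : ℂ) + 1))) (x₂ - x₁)) •
      (Zdual n d (p.1.1 + 1) (p.2.1 + 1) ⊗ₖ Zmat n d (p.1.1 + 1) (p.2.1 + 1))

lemma exp_pi_I_int (k : ℤ) : Complex.exp (↑Real.pi * I * k) = (-1 : ℂ) ^ k := by
  rw [show (↑Real.pi * I * k : ℂ) = k * (↑Real.pi * I) by ring, Complex.exp_int_mul,
    Complex.exp_pi_mul_I]

lemma theta1_term_pair (τ z : ℂ) (m : ℕ) :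
    Complex.exp (↑Real.pi * I * τ / 4 + ↑Real.pi * I * z - ↑Real.pi * I / 2) *
        (jacobiTheta₂_term (m : ℤ) (z + (1 + τ) / 2) τ
          + jacobiTheta₂_term (-((m : ℤ) + 1)) (z + (1 + τ) / 2) τ) =
      2 * Complex.exp (↑Real.pi * I * τ / 4) *
        ((-1 : ℂ) ^ m * Complex.exp (↑Real.pi * I * τ * (m : ℂ) * ((m : ℂ) + 1)) *
          Complex.sin ((2 * (m : ℂ) + 1) * ↑Real.pi * z)) := by
  have h1 : ((-((m : ℤ) + 1) : ℤ) : ℂ) = -((m : ℂ) + 1) := by push_cast; ring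
  rw [jacobiTheta₂_term, jacobiTheta₂_term, h1, Complex.sin, mul_add,
    ← Complex.exp_add, ← Complex.exp_add]
  push_cast
  have e1 : ↑Real.pi * I * τ / 4 + ↑Real.pi * I * z - ↑Real.pi * I / 2 +
      (2 * ↑Real.pi * I * ↑m * (z + (1 + τ) / 2) + ↑Real.pi * I * (↑m : ℂ) ^ 2 * τ) =
      (↑Real.pi * I * ↑m) + (↑Real.pi * I * τ / 4 + ↑Real.pi * I * τ * ↑m * (↑m + 1))
        + ((2 * ↑m + 1) * ↑Real.pi * z * I + (-(↑Real.pi) * I / 2)) := by ring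
  have e2 : ↑Real.pi * I * τ / 4 + ↑Real.pi * I * z - ↑Real.pi * I / 2 +
      (2 * ↑Real.pi * I * -(↑m + 1) * (z + (1 + τ) / 2) + ↑Real.pi * I * (-(↑m + 1)) ^ 2 * τ) =
      (↑Real.pi * I * (-(2 * ↑m) - 1) + (↑Real.pi * I * ↑m)) +
        (↑Real.pi * I * τ / 4 + ↑Real.pi * I * τ * ↑m * (↑m + 1))
        + (-((2 * ↑m + 1) * ↑Real.pi * z) * I + (-(↑Real.pi) * I / 2)) := by ring
  rw [e1, e2]
  have hm1 : Complex.exp (↑Real.pi * I * (m : ℂ)) = (-1 : ℂ) ^ (m : ℕ) := by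
    have := exp_pi_I_int (m : ℤ); push_cast at this; rw [this]; norm_cast
  have hm2 : Complex.exp (↑Real.pi * I * (-(2 * (m : ℂ)) - 1)) = -1 := by
    have h := exp_pi_I_int (-(2 * (m : ℤ)) - 1)
    have harg : (↑Real.pi * I * (-(2 * (m : ℂ)) - 1)) = (↑Real.pi * I * ((-(2 * (m : ℤ)) - 1 : ℤ) : ℂ)) := by
      push_cast; ring
    rw [harg, h, show (-(2 * (m : ℤ)) - 1) = -(2 * (m : ℤ) + 1) by ring,
      _root_.zpow_neg, show (2 * (m : ℤ) + 1) = ((2 * m + 1 : ℕ) : ℤ) by push_cast; ring,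
      zpow_natCast, pow_succ, pow_mul]
    norm_num
  have hI : Complex.exp (-(↑Real.pi : ℂ) * I / 2) = -I := by
    have : (-(↑Real.pi : ℂ) * I / 2) = (-(Real.pi / 2) : ℝ) * I := by push_cast; ring
    rw [this, Complex.exp_mul_I]
    push_cast
    rw [Complex.cos_neg, Complex.sin_neg]
    simp [Complex.cos_pi_div_two, Complex.sin_pi_div_two]
  simp only [Complex.exp_add]
  rw [hm1, hm2, hI]
  ring

theorem theta1_eq (τ z : ℂ) (hτ : 0 < τ.im) :
    theta1 τ z = Complex.exp (↑Real.pi * I * τ / 4 + ↑Real.pi * I * z - ↑Real.pi * I / 2) *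
      jacobiTheta₂ (z + (1 + τ) / 2) τ := by
  set c := Complex.exp (↑Real.pi * I * τ / 4 + ↑Real.pi * I * z - ↑Real.pi * I / 2)
  have h := (hasSum_jacobiTheta₂_term (z + (1 + τ) / 2) hτ).mul_left c
  have h2 := h.nat_add_neg_add_one
  have h3 : HasSum (fun m : ℕ => 2 * Complex.exp (↑Real.pi * I * τ / 4) *
      ((-1 : ℂ) ^ m * Complex.exp (↑Real.pi * I * τ * (m : ℂ) * ((m : ℂ) + 1)) *
        Complex.sin ((2 * (m : ℂ) + 1) * ↑Real.pi * z)))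
      (c * jacobiTheta₂ (z + (1 + τ) / 2) τ) := by
    refine h2.congr_fun fun m => ?_
    rw [← theta1_term_pair τ z m, mul_add]
  rw [theta1, ← tsum_mul_left]
  exact h3.tsum_eq



/-- `Θ(τ) = πi θ₂(w₀,τ) + θ₂'(w₀,τ)` with `w₀ = (1+τ)/2`; equals `θ̄'(0)` up to nonzero factor. -/
def Th (τ : ℂ) : ℂ :=
  ↑Real.pi * I * jacobiTheta₂ ((1 + τ) / 2) τ + jacobiTheta₂' ((1 + τ) / 2) τ

lemma jacobiTheta₂_term_tau_add_one (n : ℤ) (z τ : ℂ) :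
    jacobiTheta₂_term n z (τ + 1) = jacobiTheta₂_term n (z + 1/2) τ := by
  obtain ⟨k, hk⟩ := Int.even_mul_succ_self (n - 1)
  have hk' : ((n : ℂ) - 1) * n = 2 * k := by
    have h := congrArg (Int.cast : ℤ → ℂ) hk
    push_cast at h; linear_combination h
  unfold jacobiTheta₂_term
  rw [show 2 * ↑Real.pi * I * n * z + ↑Real.pi * I * n ^ 2 * (τ + 1) =
    (2 * ↑Real.pi * I * n * (z + 1/2) + ↑Real.pi * I * n ^ 2 * τ) + (k : ℂ) * (2 * ↑Real.pi * I) by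
      linear_combination (↑Real.pi * I) * hk', Complex.exp_add,
    Complex.exp_int_mul_two_pi_mul_I, mul_one]

lemma jacobiTheta₂_tau_add_one (z τ : ℂ) :
    jacobiTheta₂ z (τ + 1) = jacobiTheta₂ (z + 1/2) τ :=
  tsum_congr fun n => jacobiTheta₂_term_tau_add_one n z τ

lemma jacobiTheta₂'_tau_add_one (z τ : ℂ) :
    jacobiTheta₂' z (τ + 1) = jacobiTheta₂' (z + 1/2) τ :=
  tsum_congr fun n => by
    unfold jacobiTheta₂'_term; rw [jacobiTheta₂_term_tau_add_one]

lemma Th_add_one (τ : ℂ) : Th (τ + 1) = Th τ := by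
  unfold Th
  rw [jacobiTheta₂_tau_add_one, jacobiTheta₂'_tau_add_one,
    show (1 + (τ + 1)) / 2 + 1/2 = (1 + τ) / 2 + 1 by ring,
    jacobiTheta₂_add_left, jacobiTheta₂'_add_left]

lemma Th_int_shift (τ : ℂ) (k : ℤ) : Th (τ + k) = Th τ := by
  induction k using Int.induction_on with
  | zero => simp
  | succ k ih =>
      push_cast
      push_cast at ih
      rw [show τ + ((k : ℂ) + 1) = (τ + (k : ℂ)) + 1 by ring, Th_add_one, ih]
  | pred k ih =>
      push_cast
      push_cast at ih
      have h := Th_add_one (τ + (-(k : ℂ) - 1))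
      rw [show τ + (-(k : ℂ) - 1) + 1 = τ + -(k : ℂ) by ring] at h
      rw [h] at ih
      exact ih

lemma Th_S {τ : ℂ} (hτ : τ ≠ 0) :
    1 / (-I * τ) ^ (1/2 : ℂ) * Complex.exp (-↑Real.pi * I * ((τ - 1)/2) ^ 2 / τ) *
      Th (-1 / τ) = τ * Th τ := by
  have h1 := jacobiTheta₂_functional_equation ((τ - 1)/2) τ
  have h2 := jacobiTheta₂'_functional_equation ((τ - 1)/2) τ
  have harg : (τ - 1)/2 / τ = (1 + (-1/τ)) / 2 := by field_simp; ring
  have hw : (1 + τ) / 2 = (τ - 1)/2 + 1 := by ring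
  have h2' : τ * jacobiTheta₂' ((τ - 1)/2) τ =
      1 / (-I * τ) ^ (1/2 : ℂ) * Complex.exp (-↑Real.pi * I * ((τ - 1)/2) ^ 2 / τ) *
        (jacobiTheta₂' ((τ - 1) / 2 / τ) (-1 / τ) -
          2 * ↑Real.pi * I * ((τ - 1) / 2) * jacobiTheta₂ ((τ - 1) / 2 / τ) (-1 / τ)) := by
    rw [h2]; field_simp
  rw [Th, Th, hw, jacobiTheta₂_add_left, jacobiTheta₂'_add_left, ← harg]
  linear_combination (-(↑Real.pi * I * τ)) * h1 - h2'

lemma two_mul_add_one_le_three_pow (m : ℕ) : (2 * m + 1 : ℝ) ≤ 3 ^ m := by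
  induction m with
  | zero => norm_num
  | succ m ih =>
      have h3 : (1 : ℝ) ≤ 3 ^ m := one_le_pow₀ (by norm_num)
      rw [pow_succ]
      push_cast
      nlinarith

lemma Th_big {τ : ℂ} (hτ : (2:ℝ)/5 ≤ τ.im) : Th τ ≠ 0 := by
  have hτ0 : 0 < τ.im := lt_of_lt_of_le (by norm_num) hτ
  set w : ℂ := (1 + τ) / 2 with hw
  have hs : HasSum (fun n : ℤ => ↑Real.pi * I * (2 * (n:ℂ) + 1) *
      Complex.exp (↑Real.pi * I * τ * n * (n + 1) + ↑Real.pi * I * n)) (Th τ) := by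
    refine (((hasSum_jacobiTheta₂_term w hτ0).mul_left (↑Real.pi * I)).add
      (hasSum_jacobiTheta₂'_term w hτ0)).congr_fun fun n => ?_
    unfold jacobiTheta₂'_term jacobiTheta₂_term
    rw [show 2 * ↑Real.pi * I * (n:ℂ) * w + ↑Real.pi * I * (n:ℂ) ^ 2 * τ =
      ↑Real.pi * I * τ * n * (n + 1) + ↑Real.pi * I * n by rw [hw]; ring]
    ring
  have hp := hs.nat_add_neg_add_one
  set b : ℕ → ℂ := fun m => 2 * ↑Real.pi * I * (-1:ℂ)^m * (2*(m:ℂ)+1) *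
    Complex.exp (↑Real.pi * I * τ * m * (m+1)) with hbdef
  have hexp1 : ∀ m : ℕ, Complex.exp (↑Real.pi * I * (m:ℂ)) = (-1:ℂ)^m := by
    intro m
    rw [show ↑Real.pi * I * (m:ℂ) = ((m:ℤ):ℂ) * (↑Real.pi * I) by push_cast; ring,
      Complex.exp_int_mul, Complex.exp_pi_mul_I, zpow_natCast]
  have hexp2 : ∀ m : ℕ, Complex.exp (↑Real.pi * I * (-(m:ℂ)-1)) = -(-1:ℂ)^m := by
    intro m
    rw [show ↑Real.pi * I * (-(m:ℂ)-1) = ((-(m:ℤ)-1 : ℤ):ℂ) * (↑Real.pi * I) by push_cast; ring,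
      Complex.exp_int_mul, Complex.exp_pi_mul_I,
      show (-(m:ℤ)-1 : ℤ) = -((m+1 : ℕ):ℤ) by push_cast; ring, _root_.zpow_neg, zpow_natCast,
      pow_succ, mul_inv, ← inv_pow, inv_neg, inv_one, mul_neg_one]
  have hb : HasSum b (Th τ) := by
    refine hp.congr_fun fun m => ?_
    rw [hbdef]
    push_cast
    rw [show ↑Real.pi * I * τ * (m:ℂ) * (m+1) + ↑Real.pi * I * (m:ℂ) =
        ↑Real.pi * I * τ * m * (m+1) + ↑Real.pi * I * (m:ℂ) by ring, Complex.exp_add,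
      show ↑Real.pi * I * τ * (-((m:ℂ)+1)) * (-((m:ℂ)+1)+1) + ↑Real.pi * I * (-((m:ℂ)+1)) =
        ↑Real.pi * I * τ * m * (m+1) + ↑Real.pi * I * (-(m:ℂ)-1) by ring, Complex.exp_add,
      hexp1, hexp2]
    ring
  have e1 : Th τ = b 0 + ∑' m : ℕ, b (m+1) := by
    rw [← hb.tsum_eq, hb.summable.tsum_eq_zero_add]
  have hb0 : b 0 = 2 * ↑Real.pi * I := by simp [hbdef]
  set r : ℝ := Real.exp (-(Real.pi * τ.im)) with hrdef
  have hr0 : 0 < r := Real.exp_pos _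
  have hr1 : r < 1 := by
    rw [hrdef, Real.exp_lt_one_iff]
    nlinarith [Real.pi_pos]
  have hnorm : ∀ k : ℕ, ‖b k‖ = 2 * Real.pi * (2*k+1) * r ^ (k*(k+1)) := by
    intro k
    rw [hbdef]
    simp only [norm_mul, norm_pow, norm_neg, norm_one, one_pow,
      Complex.norm_I, Complex.norm_exp, Complex.norm_two, Complex.norm_real, Real.norm_eq_abs]
    have hre : (↑Real.pi * I * τ * (k:ℂ) * ((k:ℂ)+1)).re = ((k*(k+1):ℕ)) * (-(Real.pi * τ.im)) := by
      have : (↑Real.pi * I * τ * (k:ℂ) * ((k:ℂ)+1)) =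
          Complex.I * τ * ((Real.pi * (k * (k+1)) : ℝ):ℂ) := by push_cast; ring
      rw [this]
      simp [Complex.mul_re, Complex.mul_im]
      push_cast
      ring
    rw [hre, Real.exp_nat_mul, ← hrdef]
    have habs : ‖(2*(k:ℂ)+1)‖ = (2*(k:ℝ)+1) := by
      rw [show (2*(k:ℂ)+1) = (((2*(k:ℝ)+1) : ℝ):ℂ) by push_cast; ring, Complex.norm_real, Real.norm_eq_abs,
        _root_.abs_of_nonneg (by positivity : (0:ℝ) ≤ 2*(k:ℝ)+1)]
    rw [habs, _root_.abs_of_nonneg Real.pi_pos.le]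
    push_cast
    ring
  have hrsq : r^2 ≤ 1/7 := by
    have h2 : r^2 = Real.exp (-(Real.pi * τ.im) * 2) := by
      rw [hrdef, ← Real.exp_nat_mul]; norm_num; ring_nf
    have h3 : Real.exp (-(Real.pi * τ.im) * 2) ≤ Real.exp (-2) := by
      apply Real.exp_le_exp.mpr
      nlinarith [Real.pi_gt_three]
    have h4 : Real.exp (-2) ≤ 1/7 := by
      rw [Real.exp_neg]
      have h5 : (7:ℝ) ≤ Real.exp 2 := by
        have := Real.exp_one_gt_d9
        have h6 : Real.exp 2 = (Real.exp 1)^2 := by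
          rw [← Real.exp_nat_mul]; norm_num
        nlinarith
      rw [one_div]
      exact inv_anti₀ (by norm_num) h5
    linarith [h2 ▸ h3]
  set u : ℝ := 3 * r^2 with hudef
  have hu0 : 0 ≤ u := by positivity
  have hu1 : u ≤ 3/7 := by rw [hudef]; linarith
  have hu2 : u < 1 := lt_of_le_of_lt hu1 (by norm_num)
  have hterm : ∀ m : ℕ, ‖b (m+1)‖ ≤ 2 * Real.pi * u ^ (m+1) := by
    intro m
    have h1 : r ^ ((m+1)*(m+1+1)) ≤ r ^ (2*(m+1)) :=
      pow_le_pow_of_le_one hr0.le hr1.le (by nlinarith)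
    have h2 : (2*((m:ℝ)+1)+1) ≤ 3 ^ (m+1) := by
      have := two_mul_add_one_le_three_pow (m+1); push_cast at this; linarith
    have h3 : u ^ (m+1) = 3^(m+1) * r^(2*(m+1)) := by
      rw [hudef, mul_pow, pow_mul]
    have h4 : (0:ℝ) ≤ r ^ (2*(m+1)) := by positivity
    have h5 : (2*((m:ℝ)+1)+1) * r ^ ((m+1)*(m+1+1)) ≤ 3^(m+1) * r^(2*(m+1)) := by
      calc (2*((m:ℝ)+1)+1) * r ^ ((m+1)*(m+1+1)) ≤ (2*((m:ℝ)+1)+1) * r ^ (2*(m+1)) := by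
            apply mul_le_mul_of_nonneg_left h1 (by positivity)
        _ ≤ 3^(m+1) * r^(2*(m+1)) := mul_le_mul_of_nonneg_right h2 h4
    rw [hnorm (m+1), h3]
    push_cast
    calc 2 * Real.pi * (2*((m:ℝ)+1)+1) * r ^ ((m+1)*(m+1+1)) =
          2 * Real.pi * ((2*((m:ℝ)+1)+1) * r ^ ((m+1)*(m+1+1))) := by ring
      _ ≤ 2 * Real.pi * (3^(m+1) * r^(2*(m+1))) :=
          mul_le_mul_of_nonneg_left h5 (by positivity)
  have hmaj : Summable (fun m : ℕ => 2 * Real.pi * u ^ (m+1)) := by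
    have := (summable_geometric_of_lt_one hu0 hu2).mul_left (2 * Real.pi * u)
    refine this.congr fun m => ?_
    rw [pow_succ']
    ring
  have hsumb : Summable (fun m : ℕ => ‖b (m+1)‖) :=
    Summable.of_nonneg_of_le (fun m => norm_nonneg _) hterm hmaj
  have hR : ‖∑' m : ℕ, b (m+1)‖ ≤ 2 * Real.pi * (3/4) := by
    calc ‖∑' m : ℕ, b (m+1)‖ ≤ ∑' m : ℕ, ‖b (m+1)‖ := norm_tsum_le_tsum_norm hsumb
      _ ≤ ∑' m : ℕ, 2 * Real.pi * u ^ (m+1) := Summable.tsum_le_tsum hterm hsumb hmaj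
      _ = 2 * Real.pi * u * (1-u)⁻¹ := by
          rw [show (fun m : ℕ => 2 * Real.pi * u ^ (m+1)) = fun m : ℕ => (2 * Real.pi * u) * u ^ m
            from funext fun m => by rw [pow_succ']; ring, tsum_mul_left,
            tsum_geometric_of_lt_one hu0 hu2]
      _ ≤ 2 * Real.pi * (3/4) := by
          have h47 : (4:ℝ)/7 ≤ 1 - u := by linarith
          have hiu : (1-u)⁻¹ ≤ 7/4 := by
            rw [show (7:ℝ)/4 = ((4:ℝ)/7)⁻¹ by norm_num]
            exact inv_anti₀ (by norm_num) h47
          have : u * (1-u)⁻¹ ≤ (3/7) * (7/4) := by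
            apply mul_le_mul hu1 hiu (by positivity) (by norm_num)
          calc 2 * Real.pi * u * (1-u)⁻¹ = 2 * Real.pi * (u * (1-u)⁻¹) := by ring
            _ ≤ 2 * Real.pi * ((3/7) * (7/4)) :=
                mul_le_mul_of_nonneg_left this (by positivity)
            _ = 2 * Real.pi * (3/4) := by norm_num
  intro h0
  rw [h0, hb0] at e1
  have hRval : ∑' m : ℕ, b (m+1) = -(2 * ↑Real.pi * I) := by linear_combination -e1
  rw [hRval] at hR
  have : ‖-(2 * ↑Real.pi * I : ℂ)‖ = 2 * Real.pi := by
    rw [norm_neg]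
    simp [norm_mul, Complex.norm_I, Complex.norm_two, Complex.norm_real, Real.norm_eq_abs,
      _root_.abs_of_nonneg Real.pi_pos.le]
  rw [this] at hR
  nlinarith [Real.pi_pos]

lemma Th_ne {τ : ℂ} (hτ : 0 < τ.im) : Th τ ≠ 0 := by
  have key : ∀ N : ℕ, ∀ σ : ℂ, 0 < σ.im → 2/5 * (1/2)^N ≤ σ.im → Th σ ≠ 0 := by
    intro N
    induction N with
    | zero => intro σ h0 h1; exact Th_big (by simpa using h1)
    | succ N ih =>
        intro σ h0 h1
        by_cases hbig : (2:ℝ)/5 ≤ σ.im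
        · exact Th_big hbig
        push_neg at hbig
        set k : ℤ := -(round σ.re) with hkdef
        set σ' : ℂ := σ + k with hσ'def
        have hre : |σ'.re| ≤ 1/2 := by
          rw [hσ'def]
          simp only [Complex.add_re, Complex.intCast_re, hkdef]
          push_cast
          rw [show σ.re + -(round σ.re : ℝ) = σ.re - round σ.re by ring]
          exact abs_sub_round σ.re
        have him : σ'.im = σ.im := by
          rw [hσ'def]; simp
        have hσ'0 : σ' ≠ 0 := fun h => by
          rw [h] at him; simp at him; exact ne_of_gt h0 him.symm
        have hns0 : 0 < Complex.normSq σ' := Complex.normSq_pos.mpr hσ'0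
        have hns : Complex.normSq σ' ≤ 1/2 := by
          rw [Complex.normSq_apply, him]
          nlinarith [abs_nonneg σ'.re, _root_.sq_abs σ'.re, sq_nonneg σ'.re]
        have hσim : (-1/σ').im = σ.im / Complex.normSq σ' := by
          rw [show (-1/σ' : ℂ) = -(σ'⁻¹) by ring, Complex.neg_im, Complex.inv_im, him]
          ring
        have hσpos : 0 < (-1/σ').im := by
          rw [hσim]; positivity
        have hσge : 2/5 * (1/2)^N ≤ (-1/σ').im := by
          rw [hσim]
          have h2 := div_le_div_of_nonneg_left h0.le hns0 hns
          have h3 : σ.im/(1/2) = 2*σ.im := by ring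
          have h4 : (1/2:ℝ)^(N+1) = (1/2)^N * (1/2) := pow_succ _ _
          rw [h4] at h1
          nlinarith
        have hThσ' : Th σ' ≠ 0 := by
          have hS := Th_S hσ'0
          have hA : 1 / (-I * σ') ^ (1/2 : ℂ) *
              Complex.exp (-↑Real.pi * I * ((σ' - 1)/2) ^ 2 / σ') ≠ 0 := by
            apply mul_ne_zero _ (Complex.exp_ne_zero _)
            apply one_div_ne_zero
            simp [Complex.cpow_eq_zero_iff, hσ'0, I_ne_zero]
          intro hcon
          rw [hcon, mul_zero] at hS
          exact mul_ne_zero hA (ih _ hσpos hσge) hS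
        have := Th_int_shift σ k
        rw [← hσ'def] at this
        rw [← this]
        exact hThσ'
  obtain ⟨N, hN⟩ : ∃ N : ℕ, (1/2:ℝ)^N < τ.im * (5/2) := by
    obtain ⟨N, hN⟩ := exists_pow_lt_of_lt_one (by positivity : (0:ℝ) < τ.im * (5/2))
      (by norm_num : (1/2:ℝ) < 1)
    exact ⟨N, hN⟩
  exact key N τ hτ (by nlinarith)





lemma theta1_hasDerivAt (τ : ℂ) (hτ : 0 < τ.im) (z : ℂ) :
    HasDerivAt (theta1 τ)
      (Complex.exp (↑Real.pi * I * τ / 4 + ↑Real.pi * I * z - ↑Real.pi * I / 2) *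
        (↑Real.pi * I * jacobiTheta₂ (z + (1 + τ) / 2) τ + jacobiTheta₂' (z + (1 + τ) / 2) τ)) z := by
  have h1 : HasDerivAt (fun w : ℂ => Complex.exp (↑Real.pi * I * τ / 4 + ↑Real.pi * I * w
      - ↑Real.pi * I / 2)) (Complex.exp (↑Real.pi * I * τ / 4 + ↑Real.pi * I * z
      - ↑Real.pi * I / 2) * (↑Real.pi * I)) z := by
    have harg : HasDerivAt (fun w : ℂ => ↑Real.pi * I * τ / 4 + ↑Real.pi * I * w
        - ↑Real.pi * I / 2) (↑Real.pi * I) z := by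
      simpa using (((hasDerivAt_id z).const_mul (↑Real.pi * I)).const_add
        (↑Real.pi * I * τ / 4)).sub_const (↑Real.pi * I / 2)
    exact harg.cexp
  have h2 : HasDerivAt (fun w : ℂ => jacobiTheta₂ (w + (1 + τ) / 2) τ)
      (jacobiTheta₂' (z + (1 + τ) / 2) τ) z := by
    have := (hasDerivAt_jacobiTheta₂_fst (z + (1 + τ) / 2) hτ).comp z
      ((hasDerivAt_id z).add_const ((1 + τ) / 2))
    simpa [Function.comp_def] using this
  have h := h1.mul h2
  refine HasDerivAt.congr_of_eventuallyEq ?_ (Filter.Eventually.of_forall fun w => theta1_eq τ w hτ)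
  refine h.congr_deriv ?_
  ring

lemma theta1_deriv (τ : ℂ) (hτ : 0 < τ.im) :
    deriv (theta1 τ) 0 =
      Complex.exp (↑Real.pi * I * τ / 4 - ↑Real.pi * I / 2) * Th τ := by
  have h := (theta1_hasDerivAt τ hτ 0).deriv
  rw [h, Th]
  norm_num

lemma theta1_deriv_ne (τ : ℂ) (hτ : 0 < τ.im) : deriv (theta1 τ) 0 ≠ 0 := by
  rw [theta1_deriv τ hτ]
  exact mul_ne_zero (Complex.exp_ne_zero _) (Th_ne hτ)

lemma theta1_zero (τ : ℂ) : theta1 τ 0 = 0 := by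
  unfold theta1
  have : ∀ m : ℕ, (-1 : ℂ) ^ m * Complex.exp (↑Real.pi * I * τ * (m:ℂ) * ((m:ℂ) + 1)) *
      Complex.sin ((2 * (m:ℂ) + 1) * ↑Real.pi * 0) = 0 := by
    intro m; rw [mul_zero, Complex.sin_zero, mul_zero]
  rw [tsum_congr this, tsum_zero, mul_zero]

lemma theta1_continuousAt (τ : ℂ) (hτ : 0 < τ.im) (z : ℂ) :
    ContinuousAt (theta1 τ) z :=
  (theta1_hasDerivAt τ hτ z).continuousAt

lemma jacobiTheta₂_add_nat (x τ : ℂ) (d : ℕ) : jacobiTheta₂ (x + d) τ = jacobiTheta₂ x τ := by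
  induction d with
  | zero => simp
  | succ d ih =>
      push_cast
      rw [show x + ((d:ℂ) + 1) = (x + (d:ℂ)) + 1 by ring, jacobiTheta₂_add_left, ih]

lemma jacobiTheta₂_add_nat_mul_tau (x τ : ℂ) (d : ℕ) :
    jacobiTheta₂ (x + d * τ) τ =
      Complex.exp (-↑Real.pi * I * ((d:ℂ)^2 * τ + 2 * d * x)) * jacobiTheta₂ x τ := by
  induction d with
  | zero => simp
  | succ d ih =>
      push_cast
      rw [show x + ((d:ℂ) + 1) * τ = (x + d * τ) + τ by ring, jacobiTheta₂_add_left', ih,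
        ← mul_assoc, ← Complex.exp_add]
      congr 2
      push_cast
      ring

lemma theta1_quasi (τ : ℂ) (hτ : 0 < τ.im) (d : ℕ) (w : ℂ) :
    theta1 τ (w + ((d:ℂ) * τ + d)) =
      Complex.exp (-↑Real.pi * I * (d:ℂ)^2 * τ - 2 * ↑Real.pi * I * d * w) * theta1 τ w := by
  rw [theta1_eq τ _ hτ, theta1_eq τ w hτ,
    show w + ((d:ℂ) * τ + d) + (1 + τ) / 2 = ((w + (1 + τ) / 2) + d) + (d:ℂ) * τ by ring,
    jacobiTheta₂_add_nat_mul_tau, jacobiTheta₂_add_nat, ← mul_assoc, ← mul_assoc,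
    ← Complex.exp_add, ← Complex.exp_add]
  congr 1
  rw [Complex.exp_eq_exp_iff_exists_int]
  exact ⟨-(d^2 : ℕ), by push_cast; ring⟩


lemma Ymat_pow_apply (n : ℕ) (hn : 0 < n) (k : ℕ) (i j : Fin n) :
    (Ymat n ^ k) i j = if (j : ℕ) = ((i : ℕ) + k) % n then 1 else 0 := by
  induction k generalizing j with
  | zero =>
      rw [pow_zero, Matrix.one_apply]
      simp only [Nat.add_zero, Nat.mod_eq_of_lt i.isLt]
      by_cases h : i = j
      · simp [h]
      · rw [if_neg h, if_neg (fun hc => h (Fin.ext hc).symm)]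
  | succ k ih =>
      rw [pow_succ, Matrix.mul_apply]
      have key : ∀ t : Fin n, (Ymat n ^ k) i t * Ymat n t j =
          if (t : ℕ) = ((i : ℕ) + k) % n then
            (if (j : ℕ) = ((t : ℕ) + 1) % n then 1 else 0) else 0 := by
        intro t
        rw [ih, Ymat]
        by_cases h : (t : ℕ) = ((i : ℕ) + k) % n
        · simp [h]
        · simp [h]
      rw [Finset.sum_congr rfl fun t _ => key t]
      set t₀ : Fin n := ⟨((i : ℕ) + k) % n, Nat.mod_lt _ hn⟩ with ht₀
      rw [Finset.sum_eq_single t₀]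
      · have : (t₀ : ℕ) = ((i : ℕ) + k) % n := rfl
        rw [if_pos this, this, Nat.mod_add_mod]; simp [Nat.add_assoc]
      · intro t _ hne
        exact if_neg (fun hc => hne (Fin.ext hc))
      · intro h; exact absurd (Finset.mem_univ t₀) h

lemma Ymat_pow_n (n : ℕ) (hn : 0 < n) : Ymat n ^ n = 1 := by
  ext i j
  rw [Ymat_pow_apply n hn n i j, Matrix.one_apply]
  have : ((i : ℕ) + n) % n = (i : ℕ) := by
    rw [Nat.add_mod_right, Nat.mod_eq_of_lt i.isLt]
  rw [this]
  by_cases h : i = j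
  · simp [h]
  · rw [if_neg (fun hc : (j:ℕ) = (i:ℕ) => h (Fin.ext hc).symm), if_neg h]

lemma eps_pow_n (n d : ℕ) (hn : 0 < n) : eps n d ^ n = 1 := by
  rw [eps, ← Complex.exp_nat_mul,
    show (n : ℂ) * (2 * ↑Real.pi * I * d / n) = (d : ℤ) * (2 * ↑Real.pi * I) by
      field_simp [Nat.cast_ne_zero.mpr hn.ne']; norm_cast,
    Complex.exp_int_mul_two_pi_mul_I]

lemma Xmat_pow_n (n d : ℕ) (hn : 0 < n) : Xmat n d ^ n = 1 := by
  rw [Xmat, Matrix.diagonal_pow]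
  have : ((fun i : Fin n => eps n d ^ (i : ℕ)) ^ n) = fun _ : Fin n => (1 : ℂ) := by
    funext i
    rw [Pi.pow_apply, ← pow_mul, mul_comm, pow_mul, eps_pow_n n d hn, one_pow]
  rw [this, Matrix.diagonal_one]

lemma inv_pow_n {n : ℕ} (hn : 0 < n) {A : Matrix (Fin n) (Fin n) ℂ} (h : A ^ n = 1) :
    A⁻¹ ^ n = 1 := by
  have hA : A⁻¹ = A ^ (n - 1) := by
    apply Matrix.inv_eq_right_inv
    rw [← pow_succ', Nat.sub_add_cancel hn]
    exact h
  rw [hA, ← pow_mul, mul_comm, pow_mul, h, one_pow]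

lemma Zmat_nn (n d : ℕ) (hn : 0 < n) : Zmat n d n n = 1 := by
  rw [Zmat, Ymat_pow_n n hn, inv_pow_n hn (Xmat_pow_n n d hn), one_mul]

lemma Zdual_nn (n d : ℕ) (hn : 0 < n) : Zdual n d n n = (n : ℂ)⁻¹ • 1 := by
  rw [Zdual, Xmat_pow_n n d hn, inv_pow_n hn (Ymat_pow_n n hn), one_mul]

set_option maxHeartbeats 1600000 in
/-- `r(v; x₁, x₂)` has a simple pole at `v = 0` with residue `(1/n) 𝟙 ⊗ 𝟙`. -/
theorem stmt15 (n d : ℕ) (hd : 0 < d) (hdn : d < n) (hcop : Nat.gcd d n = 1)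
    (τ : ℂ) (hτ : 0 < τ.im) (x₁ x₂ : ℂ)
    (hx : theta1 τ (x₂ - x₁) ≠ 0)
    (hpol : ∀ k l : ℕ, 1 ≤ k → k ≤ n → 1 ≤ l → l ≤ n → (k, l) ≠ (n, n) →
      theta1 τ (((d : ℂ) / n) * (k * τ + l)) ≠ 0) :
    Filter.Tendsto (fun v : ℂ => v • rmat n d τ v x₁ x₂)
      (nhdsWithin 0 {(0 : ℂ)}ᶜ)
      (nhds (((n : ℂ)⁻¹) • (1 : Matrix (Fin n × Fin n) (Fin n × Fin n) ℂ))) := by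
  have hn : 0 < n := lt_trans hd hdn
  have hnC : (n : ℂ) ≠ 0 := Nat.cast_ne_zero.mpr hn.ne'
  set z : ℂ := x₂ - x₁ with hz
  set Dτ : ℂ := deriv (theta1 τ) 0 with hDdef
  have hDne : Dτ ≠ 0 := theta1_deriv_ne τ hτ
  have hn1 : n - 1 < n := Nat.sub_lt hn one_pos
  set p₀ : Fin n × Fin n := (⟨n-1, hn1⟩, ⟨n-1, hn1⟩) with hp₀
  set coefp : Fin n × Fin n → ℂ → ℂ := fun p v =>
    Complex.exp (2 * ↑Real.pi * I * d * ((p.1.1 : ℂ) + 1) * z / n) *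
      sigmaK τ (v + ((d : ℂ) / n) * (((p.1.1 : ℂ) + 1) * τ + ((p.2.1 : ℂ) + 1))) z with hcoefp
  set M : Fin n × Fin n → Matrix (Fin n × Fin n) (Fin n × Fin n) ℂ := fun p =>
    Zdual n d (p.1.1 + 1) (p.2.1 + 1) ⊗ₖ Zmat n d (p.1.1 + 1) (p.2.1 + 1) with hM
  have hfun : (fun v : ℂ => v • rmat n d τ v x₁ x₂) =
      fun v => ∑ p : Fin n × Fin n, (v * coefp p v) • M p := by
    funext v
    rw [rmat, Finset.smul_sum]
    exact Finset.sum_congr rfl fun p _ => smul_smul v _ _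
  have hid : Filter.Tendsto (fun v : ℂ => v) (nhdsWithin 0 {(0:ℂ)}ᶜ) (nhds 0) :=
    Filter.tendsto_id.mono_left nhdsWithin_le_nhds
  -- limit of each scalar coefficient
  have hlim : ∀ p : Fin n × Fin n, Filter.Tendsto (fun v => v * coefp p v)
      (nhdsWithin 0 {(0:ℂ)}ᶜ) (nhds (if p = p₀ then (1:ℂ) else 0)) := by
    intro p
    by_cases hp : p = p₀
    · -- the singular term
      subst hp
      rw [if_pos rfl]
      have hcast : ((p₀.1.1 : ℂ) + 1) = (n : ℂ) := by
        rw [hp₀]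
        show ((n - 1 : ℕ) : ℂ) + 1 = (n : ℂ)
        rw [Nat.cast_sub hn]
        ring
      have hc : ((d : ℂ) / n) * (((p₀.1.1 : ℂ) + 1) * τ + ((p₀.2.1 : ℂ) + 1)) =
          (d : ℂ) * τ + d := by
        rw [hcast]
        field_simp
      have hE : Complex.exp (2 * ↑Real.pi * I * d * ((p₀.1.1 : ℂ) + 1) * z / n) =
          Complex.exp (2 * ↑Real.pi * I * d * z) := by
        rw [hcast]
        congr 1
        field_simp
      set φ : ℂ → ℂ := fun w => Complex.exp (-↑Real.pi * I * (d:ℂ)^2 * τ -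
        2 * ↑Real.pi * I * d * w) with hφ
      have hquasi : ∀ w : ℂ, theta1 τ (w + ((d:ℂ) * τ + d)) = φ w * theta1 τ w :=
        fun w => theta1_quasi τ hτ d w
      have heq : ∀ v : ℂ, v * coefp p₀ v =
          (Complex.exp (2 * ↑Real.pi * I * d * z) * φ (v + z) * Dτ * theta1 τ (v + z) /
            (φ v * theta1 τ z)) * (v / theta1 τ v) := by
        intro v
        rw [hcoefp]
        show v * (Complex.exp (2 * ↑Real.pi * I * d * ((p₀.1.1 : ℂ) + 1) * z / n) *
          sigmaK τ (v + ((d : ℂ) / n) * (((p₀.1.1 : ℂ) + 1) * τ + ((p₀.2.1 : ℂ) + 1))) z) = _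
        rw [hE, hc, sigmaK, show v + ((d:ℂ) * τ + d) + z = (v + z) + ((d:ℂ) * τ + d) by ring,
          hquasi, hquasi, ← hDdef]
        field_simp
      rw [funext heq]
      have hG1 : Filter.Tendsto (fun v : ℂ => Complex.exp (2 * ↑Real.pi * I * d * z) *
          φ (v + z) * Dτ * theta1 τ (v + z) / (φ v * theta1 τ z))
          (nhdsWithin 0 {(0:ℂ)}ᶜ)
          (nhds (Complex.exp (2 * ↑Real.pi * I * d * z) *
            φ (0 + z) * Dτ * theta1 τ (0 + z) / (φ 0 * theta1 τ z))) := by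
        have hcont : ContinuousAt (fun v : ℂ => Complex.exp (2 * ↑Real.pi * I * d * z) *
            φ (v + z) * Dτ * theta1 τ (v + z) / (φ v * theta1 τ z)) 0 := by
          have hθ : Continuous (theta1 τ) :=
            continuous_iff_continuousAt.mpr (theta1_continuousAt τ hτ)
          have hφcont : Continuous φ := by
            rw [hφ]
            exact (continuous_const.sub (continuous_const.mul continuous_id)).cexp
          have h1 : Continuous (fun v : ℂ => φ (v + z)) :=
            hφcont.comp (continuous_add_right z)
          have h2 : Continuous (fun v : ℂ => theta1 τ (v + z)) :=
            hθ.comp (continuous_add_right z)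
          exact ContinuousAt.div
            (((continuous_const.mul h1).mul continuous_const).mul h2).continuousAt
            ((hφcont.mul continuous_const).continuousAt)
            (mul_ne_zero (Complex.exp_ne_zero _) hx)
        exact hcont.tendsto.mono_left nhdsWithin_le_nhds
      have hG2 : Filter.Tendsto (fun v : ℂ => v / theta1 τ v)
          (nhdsWithin 0 {(0:ℂ)}ᶜ) (nhds Dτ⁻¹) := by
        have hdv : HasDerivAt (theta1 τ) Dτ 0 := by
          have h := theta1_hasDerivAt τ hτ 0
          rw [hDdef, h.deriv]
          exact h
        rw [hasDerivAt_iff_tendsto_slope] at hdv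
        have hslope : ∀ v : ℂ, slope (theta1 τ) 0 v = theta1 τ v / v := by
          intro v
          rw [slope_def_field, theta1_zero, sub_zero, sub_zero]
        rw [funext hslope] at hdv
        have := hdv.inv₀ hDne
        refine this.congr fun v => ?_
        rw [inv_div]
      have := hG1.mul hG2
      have hval : Complex.exp (2 * ↑Real.pi * I * d * z) * φ (0 + z) * Dτ *
          theta1 τ (0 + z) / (φ 0 * theta1 τ z) * Dτ⁻¹ = 1 := by
        rw [zero_add, hφ]
        have hmer : Complex.exp (2 * ↑Real.pi * I * d * z) *
            Complex.exp (-↑Real.pi * I * (d:ℂ)^2 * τ - 2 * ↑Real.pi * I * d * z) =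
            Complex.exp (-↑Real.pi * I * (d:ℂ)^2 * τ - 2 * ↑Real.pi * I * d * 0) := by
          rw [← Complex.exp_add]
          congr 1
          ring
        field_simp
        rw [← Complex.exp_add]
        congr 1
        ring
      rwa [hval] at this
    · -- regular terms
      rw [if_neg hp]
      have hk1 : p.1.1 + 1 ≤ n := p.1.isLt
      have hl1 : p.2.1 + 1 ≤ n := p.2.isLt
      have hkl : (p.1.1 + 1, p.2.1 + 1) ≠ (n, n) := by
        intro hcon
        apply hp
        rw [Prod.mk.injEq] at hcon
        rw [hp₀, Prod.ext_iff]
        exact ⟨Fin.ext (show (p.1 : ℕ) = n - 1 by omega),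
          Fin.ext (show (p.2 : ℕ) = n - 1 by omega)⟩
      have hc0 : theta1 τ (((d : ℂ) / n) * (((p.1.1 : ℂ) + 1) * τ + ((p.2.1 : ℂ) + 1))) ≠ 0 := by
        have := hpol (p.1.1 + 1) (p.2.1 + 1) (Nat.succ_le_succ (Nat.zero_le _)) hk1
          (Nat.succ_le_succ (Nat.zero_le _)) hl1 hkl
        push_cast at this
        exact this
      have hcont : ContinuousAt (coefp p) 0 := by
        rw [hcoefp]
        apply ContinuousAt.mul continuousAt_const
        rw [show (fun v : ℂ => sigmaK τ (v + ((d : ℂ) / n) *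
            (((p.1.1 : ℂ) + 1) * τ + ((p.2.1 : ℂ) + 1))) z) = fun v => Dτ *
            theta1 τ (v + ((d : ℂ) / n) * (((p.1.1 : ℂ) + 1) * τ + ((p.2.1 : ℂ) + 1)) + z) /
            (theta1 τ (v + ((d : ℂ) / n) * (((p.1.1 : ℂ) + 1) * τ + ((p.2.1 : ℂ) + 1))) *
              theta1 τ z) from funext fun v => rfl]
        apply ContinuousAt.div
        · exact continuousAt_const.mul ((theta1_continuousAt τ hτ _).comp
            (((continuous_id.add continuous_const).add continuous_const).continuousAt))
        · exact (((theta1_continuousAt τ hτ _).comp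
            ((continuous_id.add continuous_const).continuousAt)).mul continuousAt_const)
        · rw [zero_add]
          exact mul_ne_zero hc0 hx
      have := hid.mul (hcont.tendsto.mono_left nhdsWithin_le_nhds)
      simpa using this
  -- assemble
  rw [hfun]
  have hsum := tendsto_finset_sum (Finset.univ : Finset (Fin n × Fin n))
    (fun p _ => (hlim p).smul_const (M p))
  have hval : (∑ p : Fin n × Fin n, (if p = p₀ then (1:ℂ) else 0) • M p) =
      ((n : ℂ)⁻¹) • 1 := by
    rw [Finset.sum_eq_single p₀]
    · rw [if_pos rfl, one_smul, hM]
      show Zdual n d (p₀.1.1 + 1) (p₀.2.1 + 1) ⊗ₖ Zmat n d (p₀.1.1 + 1) (p₀.2.1 + 1) = _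
      have : p₀.1.1 + 1 = n := Nat.succ_pred_eq_of_pos hn
      rw [hp₀]
      show Zdual n d (n - 1 + 1) (n - 1 + 1) ⊗ₖ Zmat n d (n - 1 + 1) (n - 1 + 1) = _
      rw [Nat.sub_add_cancel hn, Zdual_nn n d hn, Zmat_nn n d hn,
        Matrix.smul_kronecker, Matrix.one_kronecker_one]
    · intro p _ hne
      rw [if_neg hne, zero_smul]
    · intro hcon
      exact absurd (Finset.mem_univ p₀) hcon
  rwa [hval] at hsum
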